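/- Fix δ > 0, labels z* ∈ [k]^n, log-likelihood functions ℓ_a and estimated log-likelihoods ℓ̂_a for a ∈ [k], and let ẑᵢ = argmax_{a∈[k]} ℓ̂_a(Xᵢ). Then the number of misclassified points satisfies ∑ᵢ 1{ẑᵢ ≠ z*ᵢ} ≤ ∑ᵢ ∑_{b≠z*ᵢ} 1{ℓ_{z*ᵢ}(Xᵢ) − ℓ_b(Xᵢ) < δ} + (2/δ) ∑ᵢ ∑_{b≠z*ᵢ} 1{ẑᵢ = b} · max_{a∈[k]} |ℓ̂_a(Xᵢ) − ℓ_a(Xᵢ)|. -/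

import Mathlib

/-- Decomposition of the misclustering error into ideal error plus excess error. -/
theorem stmt16 {𝒳 : Type*} {n k : ℕ} [NeZero k] (X : Fin n → 𝒳)
    (ℓ ℓhat : Fin k → 𝒳 → ℝ) (zstar zhat : Fin n → Fin k) (δ : ℝ) (hδ : 0 < δ)
    (hargmax : ∀ i a, ℓhat a (X i) ≤ ℓhat (zhat i) (X i)) :
    ((Finset.univ.filter fun i => zhat i ≠ zstar i).card : ℝ)
      ≤ (∑ i, ∑ b ∈ Finset.univ.filter (· ≠ zstar i),
          if ℓ (zstar i) (X i) - ℓ b (X i) < δ then (1:ℝ) else 0)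
        + 2 / δ * ∑ i, ∑ b ∈ Finset.univ.filter (· ≠ zstar i),
            (if zhat i = b then (1:ℝ) else 0)
              * ⨆ a : Fin k, |ℓhat a (X i) - ℓ a (X i)| := by
  classical
  haveI : Nonempty (Fin k) := ⟨⟨0, Nat.pos_of_ne_zero (NeZero.ne k)⟩⟩
  have hbdd : ∀ i, BddAbove (Set.range fun a : Fin k => |ℓhat a (X i) - ℓ a (X i)|) :=
    fun i => Set.Finite.bddAbove (Set.finite_range _)
  have hMnn : ∀ i, 0 ≤ ⨆ a : Fin k, |ℓhat a (X i) - ℓ a (X i)| := fun i =>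
    le_trans (abs_nonneg _) (le_ciSup (hbdd i) (Classical.arbitrary (Fin k)))
  have hcard : ((Finset.univ.filter fun i => zhat i ≠ zstar i).card : ℝ)
      = ∑ i, if zhat i ≠ zstar i then (1:ℝ) else 0 := by
    rw [Finset.card_filter]
    push_cast
    rfl
  rw [hcard, Finset.mul_sum, ← Finset.sum_add_distrib]
  apply Finset.sum_le_sum
  intro i _
  have hAnn : 0 ≤ ∑ b ∈ Finset.univ.filter (· ≠ zstar i),
      if ℓ (zstar i) (X i) - ℓ b (X i) < δ then (1:ℝ) else 0 :=
    Finset.sum_nonneg fun b _ => by positivity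
  have hBnn : 0 ≤ ∑ b ∈ Finset.univ.filter (· ≠ zstar i),
      (if zhat i = b then (1:ℝ) else 0) * ⨆ a : Fin k, |ℓhat a (X i) - ℓ a (X i)| :=
    Finset.sum_nonneg fun b _ => mul_nonneg (by positivity) (hMnn i)
  by_cases h : zhat i = zstar i
  · rw [if_neg (by simp [h])]
    exact add_nonneg hAnn (mul_nonneg (by positivity) hBnn)
  · rw [if_pos h]
    have hbmem : zhat i ∈ Finset.univ.filter (· ≠ zstar i) := by simp [h]
    by_cases hg : ℓ (zstar i) (X i) - ℓ (zhat i) (X i) < δ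
    · have h1 : (1:ℝ) ≤ ∑ b ∈ Finset.univ.filter (· ≠ zstar i),
          if ℓ (zstar i) (X i) - ℓ b (X i) < δ then (1:ℝ) else 0 := by
        refine le_trans ?_ (Finset.single_le_sum
          (f := fun b => if ℓ (zstar i) (X i) - ℓ b (X i) < δ then (1:ℝ) else 0)
          (fun b _ => by positivity) hbmem)
        simp [hg]
      have := mul_nonneg (by positivity : (0:ℝ) ≤ 2 / δ) hBnn
      linarith
    · have hb : |ℓhat (zhat i) (X i) - ℓ (zhat i) (X i)|
          ≤ ⨆ a : Fin k, |ℓhat a (X i) - ℓ a (X i)| := le_ciSup (hbdd i) _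
      have hz : |ℓhat (zstar i) (X i) - ℓ (zstar i) (X i)|
          ≤ ⨆ a : Fin k, |ℓhat a (X i) - ℓ a (X i)| := le_ciSup (hbdd i) _
      have harg := hargmax i (zstar i)
      have hg' : δ ≤ ℓ (zstar i) (X i) - ℓ (zhat i) (X i) := not_lt.1 hg
      have h2M : δ ≤ 2 * ⨆ a : Fin k, |ℓhat a (X i) - ℓ a (X i)| := by
        have e1 := le_abs_self (ℓhat (zhat i) (X i) - ℓ (zhat i) (X i))
        have e2 := neg_abs_le (ℓhat (zstar i) (X i) - ℓ (zstar i) (X i))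
        linarith
      have hBM : (⨆ a : Fin k, |ℓhat a (X i) - ℓ a (X i)|)
          ≤ ∑ b ∈ Finset.univ.filter (· ≠ zstar i),
            (if zhat i = b then (1:ℝ) else 0) * ⨆ a : Fin k, |ℓhat a (X i) - ℓ a (X i)| := by
        refine le_trans ?_ (Finset.single_le_sum
          (f := fun b => (if zhat i = b then (1:ℝ) else 0)
            * ⨆ a : Fin k, |ℓhat a (X i) - ℓ a (X i)|)
          (fun b _ => mul_nonneg (by positivity) (hMnn i)) hbmem)
        simp
      have h1 : (1:ℝ) ≤ 2 / δ * ∑ b ∈ Finset.univ.filter (· ≠ zstar i),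
          (if zhat i = b then (1:ℝ) else 0) * ⨆ a : Fin k, |ℓhat a (X i) - ℓ a (X i)| := by
        rw [div_mul_eq_mul_div, le_div_iff₀ hδ]
        nlinarith [hMnn i]
      linarith
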